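/- For λ ∈ [−1,0), r ∈ (0, e^{1/(2λ(1−λ))}), and α with 0 < |α| < r^{1−λ}: 0 < I_b(r) < I_b(e^{1/(2λ(1−λ))}) ≤ e^{−1/(λ(1−λ))} · I_b(1), where I_b(r) = (1/2)(−|α|^{−2/λ}r^{2/λ−2}(λ+2log|α|−2log r)/λ + |α|²r^{2λ−2}(1−2λ log r) − 2log|α|). -/

import Mathlib

open Real

/-- `F(t) = Ib(e^t)` written with exponentials. -/
private noncomputable def Fb (lam a A t : ℝ) : ℝ :=
  (1 / 2) *
    (-(Real.exp (a * (-2 / lam)) * Real.exp (t * (2 / lam - 2)) *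
        (lam + 2 * a - 2 * t)) / lam
      + A ^ 2 * Real.exp (t * (2 * lam - 2)) * (1 - 2 * lam * t)
      - 2 * a)

/-- derivative of `Fb` in `t`, in a convenient form. -/
private noncomputable def Db (lam a A t : ℝ) : ℝ :=
  Real.exp (a * (-2 / lam)) * Real.exp (t * (2 / lam - 2)) *
      (1 + 2 * (1 - lam) * (t - a) / lam ^ 2)
    + A ^ 2 * Real.exp (t * (2 * lam - 2)) * (2 * lam * (1 - lam) * t - 1)

private lemma Fb_deriv (lam a A : ℝ) (hlam : lam ≠ 0) (t : ℝ) :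
    HasDerivAt (Fb lam a A) (Db lam a A t) t := by
  have h1 : HasDerivAt (fun u : ℝ => Real.exp (u * (2 / lam - 2)))
      (Real.exp (t * (2 / lam - 2)) * (2 / lam - 2)) t := (hasDerivAt_mul_const _).exp
  have h2 : HasDerivAt (fun u : ℝ => Real.exp (u * (2 * lam - 2)))
      (Real.exp (t * (2 * lam - 2)) * (2 * lam - 2)) t := (hasDerivAt_mul_const _).exp
  have hL1 : HasDerivAt (fun u : ℝ => lam + 2 * a - 2 * u) (-2) t := by
    simpa using ((hasDerivAt_id t).const_mul (2:ℝ)).const_sub (lam + 2 * a)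
  have hL2 : HasDerivAt (fun u : ℝ => 1 - 2 * lam * u) (-(2 * lam)) t := by
    simpa using ((hasDerivAt_id t).const_mul (2*lam)).const_sub (1:ℝ)
  have hT1 := (h1.const_mul (Real.exp (a * (-2 / lam)))).mul hL1
  have hT2 := (h2.const_mul (A ^ 2)).mul hL2
  have h := (((hT1.neg.div_const lam).add hT2).sub_const (2 * a)).const_mul (1/2 : ℝ)
  have heq : Db lam a A t = 1/2 * (-(Real.exp (a * (-2/lam)) * (Real.exp (t * (2/lam - 2)) * (2/lam - 2)) * (lam + 2*a - 2*t) + Real.exp (a * (-2/lam)) * Real.exp (t * (2/lam - 2)) * (-2)) / lam + (A^2 * (Real.exp (t * (2*lam - 2)) * (2*lam - 2)) * (1 - 2*lam*t) + A^2 * Real.exp (t * (2*lam - 2)) * (-(2*lam)))) := by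
    unfold Db
    field_simp
    ring
  rw [heq]
  exact h


set_option maxHeartbeats 1600000 in
/-- For `λ ∈ [−1,0)`, `r ∈ (0, e^{1/(2λ(1−λ))})`, `0 < |α| < r^{1−λ}`:
`0 < I_b(r) < I_b(e^{1/(2λ(1−λ))}) ≤ e^{−1/(λ(1−λ))}·I_b(1)`. -/
theorem Ib_bounds
    (lam : ℝ) (hlam0 : -1 ≤ lam) (hlam1 : lam < 0)
    (r : ℝ) (hr0 : 0 < r) (hr1 : r < Real.exp (1 / (2 * lam * (1 - lam))))
    (α : ℂ) (hα0 : 0 < ‖α‖) (hα : ‖α‖ < r ^ ((1 : ℝ) - lam)) :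
    let A : ℝ := ‖α‖
    let Ib : ℝ → ℝ := fun s =>
      (1 / 2) *
        (-(A ^ (-(2 : ℝ) / lam) * s ^ (2 / lam - 2) *
            (lam + 2 * Real.log A - 2 * Real.log s)) / lam
          + A ^ 2 * s ^ (2 * lam - 2) * (1 - 2 * lam * Real.log s)
          - 2 * Real.log A)
    0 < Ib r ∧ Ib r < Ib (Real.exp (1 / (2 * lam * (1 - lam)))) ∧
      Ib (Real.exp (1 / (2 * lam * (1 - lam)))) ≤ Real.exp (-1 / (lam * (1 - lam))) * Ib 1 := by
  intro A Ib
  have hlam : lam ≠ 0 := ne_of_lt hlam1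
  have h1l : (0:ℝ) < 1 - lam := by linarith
  have hA0 : (0:ℝ) < A := hα0
  set a : ℝ := Real.log A with ha_def
  set T : ℝ := 1 / (2 * lam * (1 - lam)) with hT_def
  have hden : 2 * lam * (1 - lam) < 0 := by nlinarith
  have hdenT : 2 * lam * (1 - lam) * T = 1 := mul_one_div_cancel (ne_of_lt hden)
  have hT0 : T < 0 := by
    rw [hT_def]; exact div_neg_of_pos_of_neg one_pos hden
  have hrT : Real.log r < T := by
    have := Real.log_lt_log hr0 hr1
    rwa [Real.log_exp] at this
  have hr_lt1 : r < 1 := lt_trans hr1 (by rw [← Real.exp_zero]; exact Real.exp_lt_exp.mpr hT0)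
  have halog : a < (1 - lam) * Real.log r := by
    have := Real.log_lt_log hA0 hα
    rwa [Real.log_rpow hr0] at this
  have ha_neg : a < 0 := Real.log_neg hA0 (lt_trans hα (Real.rpow_lt_one hr0.le hr_lt1 h1l))
  set t₀ : ℝ := a / (1 - lam) with ht₀_def
  have ht₀r : t₀ < Real.log r := by
    rw [ht₀_def, div_lt_iff₀ h1l]; linarith
  have haT : a < (1 - lam) * T := by nlinarith
  have ht₀T : t₀ < T := by
    rw [ht₀_def, div_lt_iff₀ h1l]; linarith
  -- Ib s = Fb (log s)
  have hIb : ∀ s : ℝ, 0 < s → Ib s = Fb lam a A (Real.log s) := by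
    intro s hs
    simp only [Ib, Fb]
    rw [Real.rpow_def_of_pos hA0]
    simp only [Real.rpow_def_of_pos hs]
    rfl
  have hA2 : A ^ 2 = Real.exp (2 * a) := by
    rw [pow_two, ← Real.exp_log hA0, ← ha_def, ← Real.exp_add]; ring_nf
  -- positivity of Db
  have hDpos : ∀ t : ℝ, a ≤ (1 - lam) * t → t ≤ T → 0 < Db lam a A t := by
    intro t hta htT
    have ht0 : t ≤ 0 := le_trans htT hT0.le
    have hat : a ≤ t := by nlinarith
    have e1 : 0 < Real.exp (a * (-2 / lam)) * Real.exp (t * (2 / lam - 2)) := by positivity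
    have c1 : (1:ℝ) ≤ 1 + 2 * (1 - lam) * (t - a) / lam ^ 2 := by
      have h0 : (0:ℝ) ≤ 2 * (1 - lam) * (t - a) / lam ^ 2 := by
        apply div_nonneg _ (sq_nonneg lam)
        nlinarith
      linarith
    have c2 : (0:ℝ) ≤ 2 * lam * (1 - lam) * t - 1 := by
      have := mul_le_mul_of_nonpos_left htT (le_of_lt hden)
      rw [hdenT] at this
      linarith [this]
    have e2 : (0:ℝ) ≤ A ^ 2 * Real.exp (t * (2 * lam - 2)) := by positivity
    unfold Db
    nlinarith [mul_nonneg e2 c2, mul_pos e1 (lt_of_lt_of_le one_pos c1)]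
  -- F strictly monotone on [t₀, T]
  have hmonoF : StrictMonoOn (Fb lam a A) (Set.Icc t₀ T) := by
    apply strictMonoOn_of_deriv_pos (convex_Icc _ _)
    · exact fun x _ => (Fb_deriv lam a A hlam x).continuousAt.continuousWithinAt
    · intro x hx
      rw [interior_Icc] at hx
      rw [(Fb_deriv lam a A hlam x).deriv]
      apply hDpos
      · have : t₀ < x := hx.1
        rw [ht₀_def, div_lt_iff₀ h1l] at this
        nlinarith
      · exact hx.2.le
  -- F t₀ = 0
  have hc1 : Real.exp (a * (-2 / lam)) * Real.exp (t₀ * (2 / lam - 2)) = 1 := by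
    rw [← Real.exp_add, ← Real.exp_zero]
    congr 1
    rw [ht₀_def]; field_simp; ring
  have hc2 : A ^ 2 * Real.exp (t₀ * (2 * lam - 2)) = 1 := by
    rw [hA2, ← Real.exp_add, ← Real.exp_zero]
    congr 1
    rw [ht₀_def]; field_simp; ring
  have hta0 : a = (1 - lam) * t₀ := by
    rw [ht₀_def]; field_simp
  have hF0 : Fb lam a A t₀ = 0 := by
    unfold Fb
    rw [hc1, hc2, hta0]
    field_simp
    ring
  -- the G function
  have hGd : ∀ t : ℝ, HasDerivAt (fun u => Real.exp (2 * u) * Fb lam a A u)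
      (Real.exp (2 * t) * 2 * Fb lam a A t + Real.exp (2 * t) * Db lam a A t) t := by
    intro t
    have h2t : HasDerivAt (fun u : ℝ => Real.exp (2 * u)) (Real.exp (2 * t) * 2) t := by
      have : HasDerivAt (fun u : ℝ => 2 * u) 2 t := by
        simpa using (hasDerivAt_id t).const_mul (2:ℝ)
      exact this.exp
    exact h2t.mul (Fb_deriv lam a A hlam t)
  have hFD : ∀ t : ℝ, 2 * Fb lam a A t + Db lam a A t
      = Real.exp (a * (-2 / lam)) * Real.exp (t * (2 / lam - 2)) * (2 * (t - a) / lam ^ 2)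
        + A ^ 2 * Real.exp (t * (2 * lam - 2)) * (-2 * lam ^ 2 * t) - 2 * a := by
    intro t
    unfold Fb Db
    field_simp
    ring
  have hmonoG : StrictMonoOn (fun u => Real.exp (2 * u) * Fb lam a A u) (Set.Icc T 0) := by
    apply strictMonoOn_of_deriv_pos (convex_Icc _ _)
    · exact fun x _ => ((hGd x).continuousAt).continuousWithinAt
    · intro x hx
      rw [interior_Icc] at hx
      rw [(hGd x).deriv]
      have hax : a < x := by nlinarith [hx.1, haT]
      have key : 0 < 2 * Fb lam a A x + Db lam a A x := by
        rw [hFD x]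
        have e1 : 0 < Real.exp (a * (-2 / lam)) * Real.exp (x * (2 / lam - 2)) := by positivity
        have e2 : (0:ℝ) ≤ A ^ 2 * Real.exp (x * (2 * lam - 2)) := by positivity
        have p1 : 0 < 2 * (x - a) / lam ^ 2 := by
          apply div_pos (by linarith) (by positivity)
        have p2 : (0:ℝ) ≤ -2 * lam ^ 2 * x := by nlinarith [hx.2, sq_nonneg lam]
        nlinarith [mul_pos e1 p1, mul_nonneg e2 p2]
      nlinarith [Real.exp_pos (2 * x), key]
  refine ⟨?_, ?_, ?_⟩
  · rw [hIb r hr0, ← hF0]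
    exact hmonoF ⟨le_refl _, ht₀T.le⟩ ⟨ht₀r.le, hrT.le⟩ ht₀r
  · rw [hIb r hr0, hIb _ (Real.exp_pos _), Real.log_exp]
    exact hmonoF ⟨ht₀r.le, hrT.le⟩ ⟨ht₀T.le, le_refl _⟩ hrT
  · rw [hIb _ (Real.exp_pos _), Real.log_exp, hIb 1 one_pos, Real.log_one]
    have hG := hmonoG ⟨le_refl _, hT0.le⟩ ⟨hT0.le, le_refl _⟩ hT0
    simp only [mul_zero, Real.exp_zero, one_mul] at hG
    have hexp : Real.exp (-1 / (lam * (1 - lam))) = Real.exp (-(2 * T)) := by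
      congr 1
      rw [hT_def]
      field_simp
    rw [hexp]
    have h2 : Real.exp (2 * T) * Fb lam a A T ≤ Fb lam a A 0 := hG.le
    calc Fb lam a A T = Real.exp (-(2*T)) * (Real.exp (2*T) * Fb lam a A T) := by
          rw [← mul_assoc, ← Real.exp_add]; simp
      _ ≤ Real.exp (-(2*T)) * Fb lam a A 0 := by
          exact mul_le_mul_of_nonneg_left h2 (Real.exp_pos _).le
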